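/- arXiv:0807.3127 — 3 statements merged into one kernel-verified Lean document; each statement's English description precedes it below -/
import Mathlib

section
/- Under the same hypotheses (Poisson algebra with second-class constraints C_m whose bracket matrix {C_m,C_n} has an inverse N_{mn} modulo the constraint ideal I), the Dirac bracket satisfies the Jacobi identity weakly: {{F,G}^D, K}^D + {{G,K}^D, F}^D + {{K,F}^D, G}^D ∈ I. -/
/-- The Dirac bracket associated to a bracket `br`, constraints `C` and matrix `N`. -/
def diracBracket {R : Type*} [CommRing R] {k : ℕ} (br : R → R → R)
    (C : Fin k → R) (N : Fin k → Fin k → R) (F G : R) : R :=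
  br F G - ∑ m, ∑ n, br F (C m) * N m n * br (C n) G

section DiracAux

variable {R : Type*} [CommRing R] {k : ℕ}

/-- Dirac's "starred" element: `X` minus its projection onto the constraints. -/
def diracStar (br : R → R → R) (C : Fin k → R) (N : Fin k → Fin k → R) (X : R) : R :=
  X - ∑ m, ∑ n, br X (C m) * N m n * C n

variable (br : R → R → R) (C : Fin k → R) (N : Fin k → Fin k → R)

lemma br_sub₂ (hadd₂ : ∀ a b c : R, br a (b + c) = br a b + br a c) (a x y : R) :
    br a (x - y) = br a x - br a y :=
  map_sub (AddMonoidHom.mk' (br a) (hadd₂ a)) x y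

lemma br_sum₂ (hadd₂ : ∀ a b c : R, br a (b + c) = br a b + br a c) (a : R)
    {ι : Type*} (s : Finset ι) (f : ι → R) :
    br a (∑ i ∈ s, f i) = ∑ i ∈ s, br a (f i) :=
  map_sum (AddMonoidHom.mk' (br a) (hadd₂ a)) f s

lemma br_sub₁ (hadd₁ : ∀ a b c : R, br (a + b) c = br a c + br b c) (a x y : R) :
    br (x - y) a = br x a - br y a :=
  map_sub (AddMonoidHom.mk' (fun t => br t a) (fun u v => hadd₁ u v a)) x y

/-- The bracket of a constraint with a starred element lies in the constraint ideal. -/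
lemma br_constraint_star
    (hadd₂ : ∀ a b c : R, br a (b + c) = br a b + br a c)
    (hanti : ∀ a b : R, br a b = -br b a)
    (hleib : ∀ a b c : R, br a (b * c) = br a b * c + b * br a c)
    (hN : ∀ m j, (∑ n, N m n * br (C n) (C j)) - (if m = j then 1 else 0)
            ∈ Ideal.span (Set.range C))
    (j : Fin k) (K : R) :
    br (C j) (diracStar br C N K) ∈ Ideal.span (Set.range C) := by
  have hswap : ∀ n : Fin k, br (C j) (C n) = -br (C n) (C j) := fun n => hanti _ _
  have step : br (C j) (diracStar br C N K) =
      br (C j) K - ∑ m, ∑ n,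
        ((br (C j) (br K (C m)) * N m n + br K (C m) * br (C j) (N m n)) * C n
          - br K (C m) * (N m n * br (C n) (C j))) := by
    unfold diracStar
    rw [br_sub₂ br hadd₂, br_sum₂ br hadd₂]
    congr 1
    refine Finset.sum_congr rfl fun m _ => ?_
    rw [br_sum₂ br hadd₂]
    refine Finset.sum_congr rfl fun n _ => ?_
    rw [hleib, hleib, hswap n]
    ring
  have expand : br (C j) (diracStar br C N K) =
      (∑ m, br K (C m) * ((∑ n, N m n * br (C n) (C j)) - (if m = j then 1 else 0)))
      - ∑ m, ∑ n,
          (br (C j) (br K (C m)) * N m n + br K (C m) * br (C j) (N m n)) * C n := by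
    rw [step, hanti (C j) K]
    simp only [Finset.sum_sub_distrib, mul_sub, Finset.mul_sum,
      mul_ite, mul_one, mul_zero, Finset.sum_ite_eq', Finset.mem_univ, if_true]
    ring
  rw [expand]
  refine Ideal.sub_mem _ ?_ ?_
  · exact Ideal.sum_mem _ fun m _ => Ideal.mul_mem_left _ _ (hN m j)
  · exact Ideal.sum_mem _ fun m _ => Ideal.sum_mem _ fun n _ =>
      Ideal.mul_mem_left _ _ (Ideal.subset_span ⟨n, rfl⟩)

/-- Bracketing an element of the constraint ideal with a starred element stays in the ideal. -/
lemma br_ideal_star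
    (hadd₁ : ∀ a b c : R, br (a + b) c = br a c + br b c)
    (hadd₂ : ∀ a b c : R, br a (b + c) = br a b + br a c)
    (hanti : ∀ a b : R, br a b = -br b a)
    (hleib : ∀ a b c : R, br a (b * c) = br a b * c + b * br a c)
    (hN : ∀ m j, (∑ n, N m n * br (C n) (C j)) - (if m = j then 1 else 0)
            ∈ Ideal.span (Set.range C))
    (K : R) {X : R} (hX : X ∈ Ideal.span (Set.range C)) :
    br X (diracStar br C N K) ∈ Ideal.span (Set.range C) := by
  set Y := diracStar br C N K with hY
  refine Submodule.span_induction (p := fun x _ => br x Y ∈ Ideal.span (Set.range C))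
    ?_ ?_ ?_ ?_ hX
  · rintro x ⟨j, rfl⟩
    exact br_constraint_star br C N hadd₂ hanti hleib hN j K
  · show br (0 : R) Y ∈ Ideal.span (Set.range C)
    have : br (0 : R) Y = 0 := by
      have h := hadd₁ 0 0 Y
      simpa using h
    rw [this]; exact zero_mem _
  · intro x y _ _ hx hy
    show br (x + y) Y ∈ Ideal.span (Set.range C)
    rw [hadd₁]
    exact add_mem hx hy
  · intro a x hxI hx
    show br (a • x) Y ∈ Ideal.span (Set.range C)
    have hrw : br (a * x) Y = br a Y * x + a * br x Y := by
      rw [hanti, hleib, hanti Y a, hanti Y x]; ring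
    rw [smul_eq_mul, hrw]
    exact add_mem (Ideal.mul_mem_left _ _ hxI) (Ideal.mul_mem_left _ _ hx)

/-- The Dirac bracket agrees with the plain bracket against the starred element, mod `I`. -/
lemma dirac_sub_br_star
    (hadd₂ : ∀ a b c : R, br a (b + c) = br a b + br a c)
    (hanti : ∀ a b : R, br a b = -br b a)
    (hleib : ∀ a b c : R, br a (b * c) = br a b * c + b * br a c)
    (hNanti : ∀ m n, N m n = -N n m)
    (A K : R) :
    diracBracket br C N A K - br A (diracStar br C N K) ∈ Ideal.span (Set.range C) := by
  have expand : diracBracket br C N A K - br A (diracStar br C N K) =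
      ∑ m, ∑ n, (br A (br K (C m)) * N m n + br K (C m) * br A (N m n)) * C n := by
    unfold diracBracket diracStar
    rw [br_sub₂ br hadd₂, br_sum₂ br hadd₂]
    have hexp : ∀ m : Fin k, br A (∑ n, br K (C m) * N m n * C n)
        = ∑ n, ((br A (br K (C m)) * N m n + br K (C m) * br A (N m n)) * C n
            + br K (C m) * N m n * br A (C n)) := by
      intro m
      rw [br_sum₂ br hadd₂]
      exact Finset.sum_congr rfl fun n _ => by rw [hleib, hleib]
    simp only [hexp, Finset.sum_add_distrib]
    have swap : (∑ m, ∑ n, br A (C m) * N m n * br (C n) K)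
        = ∑ m, ∑ n, br K (C m) * N m n * br A (C n) := by
      rw [Finset.sum_comm]
      refine Finset.sum_congr rfl fun n _ => Finset.sum_congr rfl fun m _ => ?_
      rw [hanti (C n) K, hNanti n m]; ring
    rw [swap]
    ring
  rw [expand]
  exact Ideal.sum_mem _ fun m _ => Ideal.sum_mem _ fun n _ =>
    Ideal.mul_mem_left _ _ (Ideal.subset_span ⟨n, rfl⟩)

/-- The difference between an element and its star is in the constraint ideal. -/
lemma sub_star_mem (X : R) :
    X - diracStar br C N X ∈ Ideal.span (Set.range C) := by
  unfold diracStar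
  rw [sub_sub_cancel]
  exact Ideal.sum_mem _ fun m _ => Ideal.sum_mem _ fun n _ =>
    Ideal.mul_mem_left _ _ (Ideal.subset_span ⟨n, rfl⟩)

end DiracAux

/-- the Dirac bracket satisfies the Jacobi identity weakly, i.e. modulo the
ideal generated by the constraints, provided `N` is an antisymmetric inverse (modulo the
constraint ideal) of the constraint-bracket matrix. -/
theorem diracBracket_jacobi_weak
    (R : Type*) [CommRing R] (br : R → R → R)
    (hadd₁ : ∀ a b c : R, br (a + b) c = br a c + br b c)
    (hadd₂ : ∀ a b c : R, br a (b + c) = br a b + br a c)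
    (hanti : ∀ a b : R, br a b = -br b a)
    (hjac : ∀ a b c : R, br a (br b c) + br b (br c a) + br c (br a b) = 0)
    (hleib : ∀ a b c : R, br a (b * c) = br a b * c + b * br a c)
    (k : ℕ) (C : Fin k → R) (N : Fin k → Fin k → R)
    (hNanti : ∀ m n, N m n = -N n m)
    (hN : ∀ m j, (∑ n, N m n * br (C n) (C j)) - (if m = j then 1 else 0)
            ∈ Ideal.span (Set.range C)) :
    ∀ F G K : R,
      diracBracket br C N (diracBracket br C N F G) K
        + diracBracket br C N (diracBracket br C N G K) F
        + diracBracket br C N (diracBracket br C N K F) G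
        ∈ Ideal.span (Set.range C) := by
  intro F G K
  set I := Ideal.span (Set.range C) with hI
  set S : R → R := diracStar br C N with hS
  have h1 : ∀ A B D : R,
      diracBracket br C N (diracBracket br C N A B) D
        - br (br (S A) (S B)) (S D) ∈ I := by
    intro A B D
    have e1 : diracBracket br C N (diracBracket br C N A B) D
        - br (diracBracket br C N A B) (S D) ∈ I :=
      dirac_sub_br_star br C N hadd₂ hanti hleib hNanti _ D
    have e2 : br (diracBracket br C N A B) (S D) - br (br A (S B)) (S D) ∈ I := by
      rw [← br_sub₁ br hadd₁]
      exact br_ideal_star br C N hadd₁ hadd₂ hanti hleib hN D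
        (dirac_sub_br_star br C N hadd₂ hanti hleib hNanti A B)
    have e3 : br (br A (S B)) (S D) - br (br (S A) (S B)) (S D) ∈ I := by
      rw [← br_sub₁ br hadd₁]
      have hmem : br A (S B) - br (S A) (S B) ∈ I := by
        rw [← br_sub₁ br hadd₁]
        exact br_ideal_star br C N hadd₁ hadd₂ hanti hleib hN B (sub_star_mem br C N A)
      exact br_ideal_star br C N hadd₁ hadd₂ hanti hleib hN D hmem
    have : diracBracket br C N (diracBracket br C N A B) D
        - br (br (S A) (S B)) (S D)
        = (diracBracket br C N (diracBracket br C N A B) D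
            - br (diracBracket br C N A B) (S D))
          + (br (diracBracket br C N A B) (S D) - br (br A (S B)) (S D))
          + (br (br A (S B)) (S D) - br (br (S A) (S B)) (S D)) := by ring
    rw [this]
    exact add_mem (add_mem e1 e2) e3
  have hjac3 : br (br (S F) (S G)) (S K) + br (br (S G) (S K)) (S F)
      + br (br (S K) (S F)) (S G) = 0 := by
    linear_combination (hanti (br (S F) (S G)) (S K)) + (hanti (br (S G) (S K)) (S F))
      + (hanti (br (S K) (S F)) (S G)) - hjac (S K) (S F) (S G)
  have final :
      diracBracket br C N (diracBracket br C N F G) K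
        + diracBracket br C N (diracBracket br C N G K) F
        + diracBracket br C N (diracBracket br C N K F) G
      = (diracBracket br C N (diracBracket br C N F G) K - br (br (S F) (S G)) (S K))
        + (diracBracket br C N (diracBracket br C N G K) F - br (br (S G) (S K)) (S F))
        + (diracBracket br C N (diracBracket br C N K F) G - br (br (S K) (S F)) (S G)) := by
    linear_combination hjac3
  rw [final]
  exact add_mem (add_mem (h1 F G K) (h1 G K F)) (h1 K F G)
end

section
/- In a Poisson algebra with constraints C_m and 'inverse matrix' N_{mn} (Σ_n N_{mn}{C_n,C_j} = δ_{mj} exactly), define F' := F − Σ_{m,n}{F,C_m} N_{mn} C_n. Then {F', C_k} ∈ I, the ideal generated by the C_m, provided {N_{mn}, C_k} ∈ I and {{F,C_m}, C_k} multiplied by C_n lies in I (which holds automatically since C_n ∈ I). -/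
/-- in a Poisson algebra with constraints `C` and exact inverse matrix `N` of the
constraint-bracket matrix, assuming `{N m n, C j}` lies in the constraint ideal `I`,
the modified element `F' := F - ∑ {F,C m} N m n * C n` has its bracket with every
constraint lying in `I`. -/
theorem modified_element_bracket_constraint_mem_ideal
    (R : Type*) [CommRing R] (br : R → R → R)
    (hadd₁ : ∀ a b c : R, br (a + b) c = br a c + br b c)
    (hadd₂ : ∀ a b c : R, br a (b + c) = br a b + br a c)
    (hanti : ∀ a b : R, br a b = -br b a)
    (hjac : ∀ a b c : R, br a (br b c) + br b (br c a) + br c (br a b) = 0)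
    (hleib : ∀ a b c : R, br a (b * c) = br a b * c + b * br a c)
    (k : ℕ) (C : Fin k → R) (N : Fin k → Fin k → R)
    (hNinv : ∀ m j, (∑ n, N m n * br (C n) (C j)) = if m = j then 1 else 0)
    (hNC : ∀ m n j, br (N m n) (C j) ∈ Ideal.span (Set.range C)) :
    ∀ (F : R) (j : Fin k),
      br (F - ∑ m, ∑ n, br F (C m) * N m n * C n) (C j) ∈ Ideal.span (Set.range C) := by
  have br0 : ∀ c : R, br 0 c = 0 := by
    intro c
    have h := hadd₁ 0 0 c
    rw [zero_add] at h
    have h2 : br 0 c + br 0 c = br 0 c + 0 := by rw [add_zero]; exact h.symm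
    exact add_left_cancel h2
  have brneg : ∀ a c : R, br (-a) c = -br a c := by
    intro a c
    have h := hadd₁ a (-a) c
    rw [add_neg_cancel, br0] at h
    exact eq_neg_of_add_eq_zero_right h.symm
  have brsub : ∀ a b c : R, br (a - b) c = br a c - br b c := by
    intro a b c
    rw [sub_eq_add_neg, hadd₁, brneg, sub_eq_add_neg]
  have brmul : ∀ a b c : R, br (a * b) c = br a c * b + a * br b c := by
    intro a b c
    rw [hanti, hleib, hanti c a, hanti c b]
    ring
  have brsum : ∀ (s : Finset (Fin k)) (f : Fin k → R) (c : R),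
      br (∑ i ∈ s, f i) c = ∑ i ∈ s, br (f i) c := by
    intro s f c
    induction s using Finset.induction_on with
    | empty => simpa using br0 c
    | insert a s hx ih => rw [Finset.sum_insert hx, hadd₁, ih, Finset.sum_insert hx]
  intro F j
  have hCmem : ∀ n, C n ∈ Ideal.span (Set.range C) := fun n => Ideal.subset_span ⟨n, rfl⟩
  have key : br (F - ∑ m, ∑ n, br F (C m) * N m n * C n) (C j)
      = (br F (C j) - ∑ m, ∑ n, br F (C m) * N m n * br (C n) (C j))
        - ∑ m, ∑ n, br (br F (C m) * N m n) (C j) * C n := by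
    rw [brsub, brsum]
    have : ∀ m, br (∑ n, br F (C m) * N m n * C n) (C j)
        = ∑ n, (br F (C m) * N m n * br (C n) (C j) + br (br F (C m) * N m n) (C j) * C n) := by
      intro m
      rw [brsum]
      refine Finset.sum_congr rfl fun n _ => ?_
      rw [brmul]
      ring
    simp only [this, Finset.sum_add_distrib]
    ring
  have hzero : (∑ m, ∑ n, br F (C m) * N m n * br (C n) (C j)) = br F (C j) := by
    have : ∀ m : Fin k, (∑ n, br F (C m) * N m n * br (C n) (C j))
        = br F (C m) * (if m = j then 1 else 0) := by
      intro m
      rw [← hNinv m j, Finset.mul_sum]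
      exact Finset.sum_congr rfl fun n _ => by ring
    simp only [this, mul_ite, mul_one, mul_zero]
    simp
  rw [key, hzero, sub_self, zero_sub]
  refine neg_mem ?_
  refine Ideal.sum_mem _ fun m _ => Ideal.sum_mem _ fun n _ => ?_
  exact Ideal.mul_mem_left _ _ (hCmem n)
end

section
/- If in a Poisson algebra the constraint-bracket matrix M_{mn} = {C_m, C_n} is invertible modulo the constraint ideal I, and F' := F − Σ{F,C_m}N_{mn}C_n, G' := G − Σ{G,C_m}N_{mn}C_n, then {F',G'} − {F,G}^D ∈ I, where {F,G}^D is the Dirac bracket. -/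
/-- with `F' := F - ∑ {F,C m} N m n * C n` and similarly `G'`, the Poisson
bracket `{F',G'}` agrees with the Dirac bracket `{F,G}^D` modulo the constraint ideal,
given that `N` is antisymmetric and inverts the constraint-bracket matrix modulo the ideal. -/
theorem poisson_of_modified_eq_diracBracket_mod_ideal
    (R : Type*) [CommRing R] (br : R → R → R)
    (hadd₁ : ∀ a b c : R, br (a + b) c = br a c + br b c)
    (hadd₂ : ∀ a b c : R, br a (b + c) = br a b + br a c)
    (hanti : ∀ a b : R, br a b = -br b a)
    (hjac : ∀ a b c : R, br a (br b c) + br b (br c a) + br c (br a b) = 0)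
    (hleib : ∀ a b c : R, br a (b * c) = br a b * c + b * br a c)
    (k : ℕ) (C : Fin k → R) (N : Fin k → Fin k → R)
    (hNanti : ∀ m n, N m n = -N n m)
    (hN : ∀ m j, (∑ n, N m n * br (C n) (C j)) - (if m = j then 1 else 0)
            ∈ Ideal.span (Set.range C)) :
    ∀ F G : R,
      br (F - ∑ m, ∑ n, br F (C m) * N m n * C n)
         (G - ∑ m, ∑ n, br G (C m) * N m n * C n)
        - diracBracket br C N F G ∈ Ideal.span (Set.range C) := by
  intro F G
  set I := Ideal.span (Set.range C) with hI
  have hC : ∀ n, C n ∈ I := fun n => Ideal.subset_span ⟨n, rfl⟩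
  have hsubL : ∀ a b c : R, br (a - b) c = br a c - br b c := fun a b c =>
    map_sub (AddMonoidHom.mk' (fun x => br x c) (fun x y => hadd₁ x y c)) a b
  have hsubR : ∀ a b c : R, br a (b - c) = br a b - br a c := fun a b c =>
    map_sub (AddMonoidHom.mk' (br a) (fun x y => hadd₂ a x y)) b c
  have hsumL : ∀ (f : Fin k → R) (c : R), br (∑ i, f i) c = ∑ i, br (f i) c := fun f c =>
    map_sum (AddMonoidHom.mk' (fun x => br x c) (fun x y => hadd₁ x y c)) f Finset.univ
  have hsumR : ∀ (a : R) (f : Fin k → R), br a (∑ i, f i) = ∑ i, br a (f i) := fun a f =>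
    map_sum (AddMonoidHom.mk' (br a) (fun x y => hadd₂ a x y)) f Finset.univ
  set SF := ∑ m, ∑ n, br F (C m) * N m n * C n with hSF
  set SG := ∑ m, ∑ n, br G (C m) * N m n * C n with hSG
  set T := ∑ m, ∑ n, br F (C m) * N m n * br G (C n) with hTdef
  set U := ∑ m, ∑ n, br G (C m) * N m n * br F (C n) with hUdef
  -- A-type lemma
  have haveA : ∀ X Y : R,
      br X (∑ m, ∑ n, br Y (C m) * N m n * C n)
        - ∑ m, ∑ n, br Y (C m) * N m n * br X (C n) ∈ I := by
    intro X Y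
    rw [hsumR]
    simp_rw [hsumR, ← Finset.sum_sub_distrib]
    refine Ideal.sum_mem _ fun m _ => Ideal.sum_mem _ fun n _ => ?_
    have h : br X (br Y (C m) * N m n * C n) - br Y (C m) * N m n * br X (C n)
        = br X (br Y (C m) * N m n) * C n := by
      rw [hleib X (br Y (C m) * N m n) (C n)]; ring
    rw [h]
    exact Ideal.mul_mem_left _ _ (hC n)
  have a1 : br F SG - U ∈ I := haveA F G
  have a2 : br G SF - T ∈ I := haveA G F
  -- U = -T
  have hTU : U = -T := by
    rw [hUdef, hTdef, Finset.sum_comm, ← Finset.sum_neg_distrib]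
    refine Finset.sum_congr rfl fun m _ => ?_
    rw [← Finset.sum_neg_distrib]
    refine Finset.sum_congr rfl fun n _ => ?_
    rw [hNanti n m]; ring
  -- the quadruple sum piece
  set P := ∑ m, ∑ n, ∑ m', ∑ n',
      (br F (C m) * N m n) * (br G (C m') * N m' n') * br (C n) (C n') with hPdef
  have hterm : ∀ (a b : R) (n n' : Fin k),
      br (a * C n) (b * C n') - a * b * br (C n) (C n') ∈ I := by
    intro a b n n'
    have h1 := hleib (a * C n) b (C n')
    have h2 : br (a * C n) (C n') = -(br (C n') a * C n + a * br (C n') (C n)) := by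
      rw [hanti, hleib]
    have h3 : br (a * C n) (b * C n') - a * b * br (C n) (C n')
        = br (a * C n) b * C n' + (-(b * br (C n') a)) * C n := by
      rw [h1, h2, hanti (C n') (C n)]; ring
    rw [h3]
    exact add_mem (Ideal.mul_mem_left _ _ (hC n')) (Ideal.mul_mem_left _ _ (hC n))
  have hSSP : br SF SG - P ∈ I := by
    rw [hSF, hSG, hPdef]
    simp_rw [hsumL, hsumR, ← Finset.sum_sub_distrib]
    refine Ideal.sum_mem _ fun m _ => Ideal.sum_mem _ fun n _ =>
      Ideal.sum_mem _ fun m' _ => Ideal.sum_mem _ fun n' _ => ?_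
    exact hterm _ _ n n'
  have hQ : ∀ m m' : Fin k,
      (∑ n', (∑ n, N m n * br (C n) (C n')) * N m' n') + N m m' ∈ I := by
    intro m m'
    have h2 : ∑ n', (if m = n' then (1:R) else 0) * N m' n' = N m' m := by
      simp
    have h1 : (∑ n', (∑ n, N m n * br (C n) (C n')) * N m' n') + N m m'
        = ∑ n', ((∑ n, N m n * br (C n) (C n')) - (if m = n' then 1 else 0)) * N m' n' := by
      simp_rw [sub_mul, Finset.sum_sub_distrib, h2, hNanti m' m]
      ring
    rw [h1]
    exact Ideal.sum_mem _ fun n' _ => Ideal.mul_mem_right _ _ (hN m n')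
  have hP : P = ∑ m, ∑ m', br F (C m) * br G (C m') *
      (∑ n', (∑ n, N m n * br (C n) (C n')) * N m' n') := by
    rw [hPdef]
    refine Finset.sum_congr rfl fun m _ => ?_
    rw [Finset.sum_comm]
    refine Finset.sum_congr rfl fun m' _ => ?_
    rw [Finset.sum_comm, Finset.mul_sum]
    refine Finset.sum_congr rfl fun n' _ => ?_
    rw [Finset.sum_mul, Finset.mul_sum]
    refine Finset.sum_congr rfl fun n _ => ?_
    ring
  have hT : T = ∑ m, ∑ m', br F (C m) * br G (C m') * N m m' := by
    rw [hTdef]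
    exact Finset.sum_congr rfl fun m _ => Finset.sum_congr rfl fun n _ => by ring
  have hPT : P + T ∈ I := by
    have heq : P + T = ∑ m, ∑ m', br F (C m) * br G (C m') *
        ((∑ n', (∑ n, N m n * br (C n) (C n')) * N m' n') + N m m') := by
      rw [hP, hT]
      simp_rw [mul_add, Finset.sum_add_distrib]
    rw [heq]
    exact Ideal.sum_mem _ fun m _ => Ideal.sum_mem _ fun m' _ =>
      Ideal.mul_mem_left _ _ (hQ m m')
  have a3 : br SF SG + T ∈ I := by
    have h5 : br SF SG + T = (br SF SG - P) + (P + T) := by ring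
    rw [h5]; exact add_mem hSSP hPT
  -- assembly
  have hExp : br (F - SF) (G - SG) = br F G - br F SG - br G SF * (-1) + br SF SG := by
    rw [hsubL, hsubR, hsubR, hanti SF G]; ring
  have hD : diracBracket br C N F G = br F G + T := by
    unfold diracBracket
    rw [hTdef]
    simp_rw [hanti (C _) G, mul_neg, Finset.sum_neg_distrib, sub_neg_eq_add]
  have hgoal : br (F - SF) (G - SG) - diracBracket br C N F G
      = -(br F SG - U) + (br G SF - T) + (br SF SG + T) := by
    rw [hExp, hD, hTU]; ring
  rw [hgoal]
  exact add_mem (add_mem (neg_mem a1) a2) a3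
end
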